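/- Let b > 0 and let Z₁ and Z₂ be independent real random variables, where Z₁ has the Laplace distribution with scale 2b and Z₂ has the Laplace distribution with scale b. Then for every constant C > 0, P(Z₁ ≤ Z₂ − C) = (2/3)·exp(−C/(2b)) − (1/6)·exp(−C/b); in particular, P(Z₁ ≤ Z₂ − C) ≤ (2/3)·exp(−C/(2b)). -/

import Mathlib

open MeasureTheory ProbabilityTheory Real

/-- A real random variable `Z` has the Laplace distribution with scale `b > 0` (with respect to
the probability measure `P`) if it is measurable and its law has density
`x ↦ (1/(2b)) · exp(−|x|/b)` with respect to Lebesgue measure. -/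
def HasLaplaceLaw {Ω : Type*} [MeasurableSpace Ω] (P : Measure Ω) (Z : Ω → ℝ) (b : ℝ) : Prop :=
  Measurable Z ∧
    P.map Z = volume.withDensity (fun x => ENNReal.ofReal ((1 / (2 * b)) * Real.exp (-|x| / b)))

section Aux
open Set


noncomputable def lapd (b x : ℝ) : ℝ := (1 / (2 * b)) * Real.exp (-|x| / b)
noncomputable def lapG (b t : ℝ) : ℝ :=
  if 0 ≤ t then (1/2) * Real.exp (-t / b) else 1 - (1/2) * Real.exp (t / b)

lemma int_exp_neg_Ioi {r : ℝ} (hr : 0 < r) (t : ℝ) :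
    ∫ x in Ioi t, exp (-(r * x)) = exp (-(r * t)) / r := by
  rw [integral_comp_mul_left_Ioi (fun x => exp (-x)) t hr, integral_exp_neg_Ioi]
  rw [smul_eq_mul]; ring

lemma int_exp_Iic {r : ℝ} (hr : 0 < r) (t : ℝ) :
    ∫ x in Iic t, exp (r * x) = exp (r * t) / r := by
  have := integral_comp_neg_Iic t (fun x => exp (-(r * x)))
  simp only [neg_mul_neg, mul_neg, neg_neg] at this
  rw [this, int_exp_neg_Ioi hr, mul_neg, neg_neg]

lemma int_exp_interval {r : ℝ} (hr : r ≠ 0) (a c : ℝ) :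
    ∫ x in a..c, exp (r * x) = (exp (r * c) - exp (r * a)) / r := by
  rw [intervalIntegral.integral_comp_mul_left (fun x => exp x) hr, integral_exp, smul_eq_mul]
  ring

lemma integrableOn_exp_neg_mul_Ioi {r : ℝ} (hr : 0 < r) (t : ℝ) :
    IntegrableOn (fun x => exp (-(r * x))) (Ioi t) := by
  simpa [neg_mul] using exp_neg_integrableOn_Ioi t hr

lemma integrableOn_exp_neg_mul_Ici {r : ℝ} (hr : 0 < r) (t : ℝ) :
    IntegrableOn (fun x => exp (-(r * x))) (Ici t) :=
  Iff.mpr integrableOn_Ici_iff_integrableOn_Ioi (integrableOn_exp_neg_mul_Ioi hr t)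

lemma lapd_nonneg {b : ℝ} (hb : 0 < b) (x : ℝ) : 0 ≤ lapd b x := by
  unfold lapd; positivity

lemma continuous_lapd (b : ℝ) : Continuous (lapd b) := by
  unfold lapd; fun_prop

lemma lapd_eq_pos {b : ℝ} (hb : 0 < b) {x : ℝ} (hx : 0 ≤ x) :
    lapd b x = (1 / (2 * b)) * exp (-((1/b) * x)) := by
  unfold lapd; rw [abs_of_nonneg hx]; ring_nf

lemma lapd_eq_neg {b : ℝ} (hb : 0 < b) {x : ℝ} (hx : x ≤ 0) :
    lapd b x = (1 / (2 * b)) * exp ((1/b) * x) := by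
  unfold lapd; rw [abs_of_nonpos hx]; ring_nf

lemma integrableOn_lapd_Ici {b : ℝ} (hb : 0 < b) (t : ℝ) :
    IntegrableOn (lapd b) (Ici t) := by
  rcases le_total 0 t with ht | ht
  · refine IntegrableOn.congr_fun ((integrableOn_exp_neg_mul_Ici (by positivity : (0:ℝ) < 1/b) t).const_mul
      (1 / (2*b))) (fun x hx => ?_) measurableSet_Ici
    exact (lapd_eq_pos hb (le_trans ht hx)).symm
  · have h1 : IntegrableOn (lapd b) (Ici 0) := by
      refine IntegrableOn.congr_fun ((integrableOn_exp_neg_mul_Ici (by positivity : (0:ℝ) < 1/b) 0).const_mul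
        (1 / (2*b))) (fun x hx => ?_) measurableSet_Ici
      exact (lapd_eq_pos hb hx).symm
    have h2 : IntegrableOn (lapd b) (Ico t 0) :=
      ((continuous_lapd b).integrableOn_Icc).mono_set Ico_subset_Icc_self
    have := h2.union h1
    rwa [Ico_union_Ici_eq_Ici ht] at this

lemma integrableOn_lapd_Iic {b : ℝ} (hb : 0 < b) (t : ℝ) :
    IntegrableOn (lapd b) (Iic t) := by
  rcases le_total t 0 with ht | ht
  · refine IntegrableOn.congr_fun ((integrableOn_exp_mul_Iic (by positivity : (0:ℝ) < 1/b) t).const_mul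
      (1 / (2*b))) (fun x hx => ?_) measurableSet_Iic
    exact (lapd_eq_neg hb (le_trans hx ht)).symm
  · have h1 : IntegrableOn (lapd b) (Iic 0) := by
      refine IntegrableOn.congr_fun ((integrableOn_exp_mul_Iic (by positivity : (0:ℝ) < 1/b) 0).const_mul
        (1 / (2*b))) (fun x hx => ?_) measurableSet_Iic
      exact (lapd_eq_neg hb hx).symm
    have h2 : IntegrableOn (lapd b) (Ioc 0 t) :=
      ((continuous_lapd b).integrableOn_Icc).mono_set Ioc_subset_Icc_self
    have := h1.union h2
    rwa [Iic_union_Ioc_eq_Iic ht] at this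

lemma integrable_lapd {b : ℝ} (hb : 0 < b) : Integrable (lapd b) := by
  have := (integrableOn_lapd_Iic hb 0).union (integrableOn_lapd_Ici hb 0)
  rwa [Iic_union_Ici, integrableOn_univ] at this


lemma integral_lapd_Ici {b : ℝ} (hb : 0 < b) (t : ℝ) :
    ∫ x in Ici t, lapd b x = lapG b t := by
  have hrb : (0:ℝ) < 1/b := by positivity
  have key : ∀ s : ℝ, 0 ≤ s → ∫ x in Ici s, lapd b x = (1/2) * exp (-s / b) := by
    intro s hs
    rw [integral_Ici_eq_integral_Ioi,
      setIntegral_congr_fun measurableSet_Ioi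
        (fun x (hx : s < x) => lapd_eq_pos hb (le_trans hs hx.le)),
      integral_const_mul, int_exp_neg_Ioi hrb]
    rw [show -(1/b * s) = -s/b by ring]
    field_simp
  rcases le_or_gt 0 t with ht | ht
  · rw [key t ht, lapG, if_pos ht]
  · rw [lapG, if_neg (not_le.mpr ht)]
    rw [← Ico_union_Ici_eq_Ici ht.le,
      setIntegral_union (Set.disjoint_left.mpr fun x (hx : x ∈ Ico t 0) (h2 : x ∈ Ici (0:ℝ)) => absurd h2 (not_le.mpr hx.2)) measurableSet_Ici
        (((continuous_lapd b).integrableOn_Icc).mono_set Ico_subset_Icc_self)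
        (integrableOn_lapd_Ici hb 0),
      key 0 le_rfl]
    have h1 : ∫ x in Ico t 0, lapd b x = (1/2) * (1 - exp (t/b)) := by
      rw [setIntegral_congr_fun measurableSet_Ico
        (fun x (hx : x ∈ Ico t 0) => lapd_eq_neg hb hx.2.le),
        integral_const_mul, integral_Ico_eq_integral_Ioo, ← integral_Ioc_eq_integral_Ioo,
        ← intervalIntegral.integral_of_le ht.le, int_exp_interval (ne_of_gt hrb)]
      rw [show (1:ℝ)/b * 0 = 0 by ring, show (1:ℝ)/b * t = t/b by ring]
      field_simp
      rw [exp_zero]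
    rw [h1]
    simp only [neg_zero, zero_div, exp_zero]
    ring

lemma lapG_nonneg {b : ℝ} (hb : 0 < b) (t : ℝ) : 0 ≤ lapG b t := by
  unfold lapG
  split_ifs with h
  · positivity
  · have : exp (t/b) ≤ 1 := by
      rw [← exp_zero]
      exact exp_le_exp.mpr (div_nonpos_of_nonpos_of_nonneg (not_le.mp h).le hb.le)
    nlinarith

lemma lapG_le_one {b : ℝ} (hb : 0 < b) (t : ℝ) : lapG b t ≤ 1 := by
  unfold lapG
  split_ifs with h
  · have : exp (-t/b) ≤ 1 := by
      rw [← exp_zero]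
      exact exp_le_exp.mpr (div_nonpos_of_nonpos_of_nonneg (neg_nonpos.mpr h) hb.le)
    nlinarith
  · nlinarith [exp_pos (t/b)]

lemma measurable_lapG (b : ℝ) : Measurable (lapG b) := by
  unfold lapG
  exact Measurable.ite measurableSet_Ici (by fun_prop) (by fun_prop)

lemma lap_measure_Ici {b : ℝ} (hb : 0 < b) (t : ℝ) :
    (volume.withDensity fun x => ENNReal.ofReal (lapd b x)) (Ici t)
      = ENNReal.ofReal (lapG b t) := by
  rw [withDensity_apply _ measurableSet_Ici, ← integral_lapd_Ici hb t,
    ← ofReal_integral_eq_lintegral_ofReal (integrableOn_lapd_Ici hb t)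
      (Filter.Eventually.of_forall fun x => lapd_nonneg hb x)]


lemma integrable_F {b C : ℝ} (hb : 0 < b) :
    Integrable (fun x => lapd (2*b) x * lapG b (x + C)) := by
  have h2b : (0:ℝ) < 2*b := by linarith
  refine Integrable.mono' (integrable_lapd h2b)
    (((continuous_lapd (2*b)).measurable.mul
      ((measurable_lapG b).comp (measurable_id.add_const C))).aestronglyMeasurable)
    (Filter.Eventually.of_forall fun x => ?_)
  rw [Real.norm_eq_abs, abs_of_nonneg (mul_nonneg (lapd_nonneg h2b x) (lapG_nonneg hb _))]
  nlinarith [lapG_le_one hb (x+C), lapG_nonneg hb (x+C), lapd_nonneg h2b x]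

lemma integral_F {b C : ℝ} (hb : 0 < b) (hC : 0 < C) :
    ∫ x, lapd (2*b) x * lapG b (x + C)
      = (2/3) * exp (-C/(2*b)) - (1/6) * exp (-C/b) := by
  have h2b : (0:ℝ) < 2*b := by linarith
  have hr1 : (0:ℝ) < 1/(2*b) := by positivity
  have hr2 : (0:ℝ) < 3/(2*b) := by positivity
  set F := fun x => lapd (2*b) x * lapG b (x + C) with hF
  have hFi : Integrable F := integrable_F hb
  -- piece 1 : Iio (-C)
  have hP1 : ∫ x in Iio (-C), F x = (5/12) * exp (-C/(2*b)) := by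
    have heq : EqOn F (fun x => (1/(4*b)) * exp ((1/(2*b)) * x)
        - ((1/(8*b)) * exp (C/b)) * exp ((3/(2*b)) * x)) (Iio (-C)) := by
      intro x (hx : x < -C)
      have hx0 : x ≤ 0 := by linarith
      have hxC : ¬ (0 ≤ x + C) := by intro h; linarith
      simp only [hF, lapd, lapG, if_neg hxC, abs_of_nonpos hx0]
      have e2 : exp (-(-x) / (2*b)) * exp ((x + C)/b)
          = exp ((3/(2*b)) * x) * exp (C/b) := by
        rw [← exp_add, ← exp_add]; congr 1; field_simp; ring
      have e1 : exp (-(-x) / (2*b)) = exp ((1/(2*b)) * x) := by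
        congr 1; field_simp
      calc (1/(2*(2*b))) * exp (-(-x)/(2*b)) * (1 - 1/2 * exp ((x + C)/b))
          = (1/(4*b)) * exp (-(-x)/(2*b))
            - (1/(8*b)) * (exp (-(-x)/(2*b)) * exp ((x + C)/b)) := by ring
        _ = _ := by rw [e2, e1]; ring
    rw [setIntegral_congr_fun measurableSet_Iio heq]
    have hi1 : IntegrableOn (fun x => (1/(4*b)) * exp ((1/(2*b)) * x)) (Iio (-C)) :=
      IntegrableOn.mono_set ((integrableOn_exp_mul_Iic hr1 (-C)).const_mul _) Iio_subset_Iic_self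
    have hi2 : IntegrableOn (fun x => ((1/(8*b)) * exp (C/b)) * exp ((3/(2*b)) * x)) (Iio (-C)) :=
      IntegrableOn.mono_set ((integrableOn_exp_mul_Iic hr2 (-C)).const_mul _) Iio_subset_Iic_self
    rw [integral_sub hi1 hi2, integral_const_mul, integral_const_mul,
      ← integral_Iic_eq_integral_Iio, ← integral_Iic_eq_integral_Iio,
      int_exp_Iic hr1, int_exp_Iic hr2]
    have e3 : exp (C/b) * exp ((3/(2*b)) * (-C)) = exp (-C/(2*b)) := by
      rw [← exp_add]; congr 1; field_simp; ring
    have e4 : exp ((1/(2*b)) * (-C)) = exp (-C/(2*b)) := by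
      congr 1; field_simp
    rw [e4]
    rw [show (1/(8*b) * exp (C/b)) * (exp ((3/(2*b)) * (-C)) / (3/(2*b)))
        = (exp (C/b) * exp ((3/(2*b)) * (-C))) * (1/(8*b) / (3/(2*b))) by ring, e3]
    field_simp
    ring
  -- piece 2 : Ico (-C) 0
  have hP2 : ∫ x in Ico (-C) 0, F x
      = (1/4) * exp (-C/(2*b)) - (1/4) * exp (-C/b) := by
    have heq : EqOn F (fun x => ((1/(8*b)) * exp (-C/b)) * exp ((-(1/(2*b))) * x))
        (Ico (-C) 0) := by
      intro x hx
      have hx0 : x ≤ 0 := hx.2.le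
      have hxC : 0 ≤ x + C := by have := hx.1; linarith
      simp only [hF, lapd, lapG, if_pos hxC, abs_of_nonpos hx0]
      have e2 : exp (-(-x) / (2*b)) * exp (-(x + C)/b)
          = exp ((-(1/(2*b))) * x) * exp (-C/b) := by
        rw [← exp_add, ← exp_add]; congr 1; field_simp; ring
      calc (1/(2*(2*b))) * exp (-(-x)/(2*b)) * (1/2 * exp (-(x + C)/b))
          = (1/(8*b)) * (exp (-(-x)/(2*b)) * exp (-(x + C)/b)) := by ring
        _ = _ := by rw [e2]; ring
    rw [setIntegral_congr_fun measurableSet_Ico heq, integral_const_mul,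
      integral_Ico_eq_integral_Ioo, ← integral_Ioc_eq_integral_Ioo,
      ← intervalIntegral.integral_of_le (by linarith : (-C) ≤ 0),
      int_exp_interval (neg_ne_zero.mpr (ne_of_gt hr1))]
    have e5 : exp (-(1/(2*b)) * 0) = 1 := by norm_num
    have e6 : exp (-(1/(2*b)) * (-C)) = exp (C/(2*b)) := by congr 1; field_simp
    have e7 : exp (-C/b) * exp (C/(2*b)) = exp (-C/(2*b)) := by
      rw [← exp_add]; congr 1; field_simp; ring
    rw [e5, e6, show (1/(8*b) * exp (-C/b)) * ((1 - exp (C/(2*b))) / (-(1/(2*b))))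
        = (exp (-C/b) * exp (C/(2*b))) * (2*b) * (1/(8*b))
          - exp (-C/b) * (2*b) * (1/(8*b)) by field_simp; ring, e7]
    field_simp
    ring
  -- piece 3 : Ici 0
  have hP3 : ∫ x in Ici 0, F x = (1/12) * exp (-C/b) := by
    have heq : EqOn F (fun x => ((1/(8*b)) * exp (-C/b)) * exp (-((3/(2*b)) * x)))
        (Ici 0) := by
      intro x (hx : (0:ℝ) ≤ x)
      have hxC : 0 ≤ x + C := by linarith
      simp only [F, lapd, lapG, if_pos hxC, abs_of_nonneg hx]
      have e2 : exp (-x / (2*b)) * exp (-(x + C)/b)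
          = exp (-((3/(2*b)) * x)) * exp (-C/b) := by
        rw [← exp_add, ← exp_add]; congr 1; field_simp; ring
      calc (1/(2*(2*b))) * exp (-x/(2*b)) * (1/2 * exp (-(x + C)/b))
          = (1/(8*b)) * (exp (-x/(2*b)) * exp (-(x + C)/b)) := by ring
        _ = _ := by rw [e2]; ring
    rw [setIntegral_congr_fun measurableSet_Ici heq, integral_const_mul,
      integral_Ici_eq_integral_Ioi, int_exp_neg_Ioi hr2]
    rw [show (3:ℝ)/(2*b) * 0 = 0 by ring]
    simp only [neg_zero, exp_zero]
    field_simp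
    ring
  -- combine
  have hsplit2 : ∫ x in Ici (-C), F x = (∫ x in Ico (-C) 0, F x) + ∫ x in Ici 0, F x := by
    rw [← Ico_union_Ici_eq_Ici (show -C ≤ (0:ℝ) by linarith),
      setIntegral_union
        (Set.disjoint_left.mpr fun x (hx : x ∈ Ico (-C) 0) (h2 : x ∈ Ici (0:ℝ)) =>
          absurd h2 (not_le.mpr hx.2))
        measurableSet_Ici hFi.integrableOn hFi.integrableOn]
  rw [← intervalIntegral.integral_Iio_add_Ici (b := -C) hFi.integrableOn hFi.integrableOn,
    hP1, hsplit2, hP2, hP3]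
  ring


theorem laplace_le_diff_prob {Ω : Type*} [MeasurableSpace Ω] (P : Measure Ω)
    [IsProbabilityMeasure P] (b : ℝ) (hb : 0 < b) (Z₁ Z₂ : Ω → ℝ)
    (h₁ : HasLaplaceLaw P Z₁ (2 * b)) (h₂ : HasLaplaceLaw P Z₂ b)
    (hind : IndepFun Z₁ Z₂ P) (C : ℝ) (hC : 0 < C) :
    P {ω | Z₁ ω ≤ Z₂ ω - C} =
        ENNReal.ofReal
          ((2 / 3) * Real.exp (-C / (2 * b)) - (1 / 6) * Real.exp (-C / b)) ∧
      P {ω | Z₁ ω ≤ Z₂ ω - C} ≤ ENNReal.ofReal ((2 / 3) * Real.exp (-C / (2 * b))) := by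
  obtain ⟨hm₁, hmap₁⟩ := h₁
  obtain ⟨hm₂, hmap₂⟩ := h₂
  have h2b : (0:ℝ) < 2*b := by linarith
  have hmap₁' : P.map Z₁ = volume.withDensity fun x => ENNReal.ofReal (lapd (2*b) x) := hmap₁
  have hmap₂' : P.map Z₂ = volume.withDensity fun x => ENNReal.ofReal (lapd b x) := hmap₂
  have hprob2 : IsProbabilityMeasure (P.map Z₂) := Measure.isProbabilityMeasure_map hm₂.aemeasurable
  have hs : MeasurableSet {p : ℝ × ℝ | p.1 ≤ p.2 - C} :=
    measurableSet_le measurable_fst (measurable_snd.sub measurable_const)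
  have hprod : P.map (fun ω => (Z₁ ω, Z₂ ω)) = (P.map Z₁).prod (P.map Z₂) :=
    (indepFun_iff_map_prod_eq_prod_map_map hm₁.aemeasurable hm₂.aemeasurable).mp hind
  have hP : P {ω | Z₁ ω ≤ Z₂ ω - C}
      = ((P.map Z₁).prod (P.map Z₂)) {p : ℝ × ℝ | p.1 ≤ p.2 - C} := by
    rw [← hprod, Measure.map_apply (hm₁.prodMk hm₂) hs]
    rfl
  have key : ((P.map Z₁).prod (P.map Z₂)) {p : ℝ × ℝ | p.1 ≤ p.2 - C}
      = ENNReal.ofReal (∫ x, lapd (2*b) x * lapG b (x + C)) := by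
    rw [Measure.prod_apply hs]
    have hslice : ∀ x : ℝ, (Prod.mk x ⁻¹' {p : ℝ × ℝ | p.1 ≤ p.2 - C}) = Ici (x + C) := by
      intro x; ext y
      simp only [mem_preimage, mem_setOf_eq, mem_Ici]
      constructor
      · intro h; linarith
      · intro h; linarith
    simp_rw [hslice, hmap₂', lap_measure_Ici hb]
    have hml : Measurable fun x => ENNReal.ofReal (lapd (2*b) x) :=
      (continuous_lapd (2*b)).measurable.ennreal_ofReal
    have hmg : Measurable fun x : ℝ => ENNReal.ofReal (lapG b (x + C)) :=
      ((measurable_lapG b).comp (measurable_id.add_const C)).ennreal_ofReal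
    rw [hmap₁', lintegral_withDensity_eq_lintegral_mul volume hml hmg]
    have : ∀ x : ℝ, ENNReal.ofReal (lapd (2*b) x) * ENNReal.ofReal (lapG b (x + C))
        = ENNReal.ofReal (lapd (2*b) x * lapG b (x + C)) := fun x =>
      (ENNReal.ofReal_mul (lapd_nonneg h2b x)).symm
    simp_rw [Pi.mul_apply, this]
    rw [← ofReal_integral_eq_lintegral_ofReal (integrable_F hb)
      (Filter.Eventually.of_forall fun x =>
        mul_nonneg (lapd_nonneg h2b x) (lapG_nonneg hb (x + C)))]
  rw [hP, key, integral_F hb hC]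
  refine ⟨rfl, ENNReal.ofReal_le_ofReal ?_⟩
  nlinarith [exp_pos (-C/b)]

end Aux
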